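/- Let R be a solvable complex Leibniz algebra with nilradical N. If every nil-independent family of derivations of N has at most m elements, then dim R ≤ dim N + m. -/

import Mathlib

open Finset Module

/-- The Leibniz identity for a bilinear bracket `b`. -/
def IsLeibniz {L : Type*} [AddCommGroup L] [Module ℂ L]
    (b : L →ₗ[ℂ] L →ₗ[ℂ] L) : Prop :=
  ∀ x y z, b x (b y z) = b (b x y) z - b (b x z) y

/-- The submodule spanned by all brackets `[S, T]`. -/
def bracketSpan {L : Type*} [AddCommGroup L] [Module ℂ L]
    (b : L →ₗ[ℂ] L →ₗ[ℂ] L) (S T : Submodule ℂ L) : Submodule ℂ L :=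
  Submodule.span ℂ {z | ∃ x ∈ S, ∃ y ∈ T, z = b x y}

/-- The lower central series: `lcs b k` is `L^{k+1}`, i.e. `lcs b 0 = L¹ = L`. -/
def lcs {L : Type*} [AddCommGroup L] [Module ℂ L]
    (b : L →ₗ[ℂ] L →ₗ[ℂ] L) : ℕ → Submodule ℂ L
  | 0 => ⊤
  | k+1 => bracketSpan b (lcs b k) ⊤

/-- The derived series: `derSeries b s` is `L^{[s+1]}`. -/
def derSeries {L : Type*} [AddCommGroup L] [Module ℂ L]
    (b : L →ₗ[ℂ] L →ₗ[ℂ] L) : ℕ → Submodule ℂ L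
  | 0 => ⊤
  | s+1 => bracketSpan b (derSeries b s) (derSeries b s)

/-- The algebra `(L, b)` is nilpotent. -/
def IsNilpotentAlg {L : Type*} [AddCommGroup L] [Module ℂ L]
    (b : L →ₗ[ℂ] L →ₗ[ℂ] L) : Prop :=
  ∃ k, lcs b k = ⊥

/-- The algebra `(L, b)` is solvable. -/
def IsSolvableAlg {L : Type*} [AddCommGroup L] [Module ℂ L]
    (b : L →ₗ[ℂ] L →ₗ[ℂ] L) : Prop :=
  ∃ s, derSeries b s = ⊥

/-- `I` is a two-sided ideal of `(L, b)`. -/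
def IsIdeal {L : Type*} [AddCommGroup L] [Module ℂ L]
    (b : L →ₗ[ℂ] L →ₗ[ℂ] L) (I : Submodule ℂ L) : Prop :=
  ∀ a ∈ I, ∀ y : L, b a y ∈ I ∧ b y a ∈ I

/-- Lower central series of the ideal `I` computed inside `L`:
`idealLCS b I k` is `I^{k+1}`. -/
def idealLCS {L : Type*} [AddCommGroup L] [Module ℂ L]
    (b : L →ₗ[ℂ] L →ₗ[ℂ] L) (I : Submodule ℂ L) : ℕ → Submodule ℂ L
  | 0 => I
  | k+1 => bracketSpan b (idealLCS b I k) I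

/-- `I` is a nilpotent two-sided ideal of `(L, b)`. -/
def IsNilpotentIdeal {L : Type*} [AddCommGroup L] [Module ℂ L]
    (b : L →ₗ[ℂ] L →ₗ[ℂ] L) (I : Submodule ℂ L) : Prop :=
  IsIdeal b I ∧ ∃ k, idealLCS b I k = ⊥

/-- `I` is the nilradical (the maximal nilpotent ideal) of `(L, b)`. -/
def IsNilradical {L : Type*} [AddCommGroup L] [Module ℂ L]
    (b : L →ₗ[ℂ] L →ₗ[ℂ] L) (I : Submodule ℂ L) : Prop :=
  IsNilpotentIdeal b I ∧ ∀ J : Submodule ℂ L, IsNilpotentIdeal b J → J ≤ I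

/-- Isomorphism of bracket algebras. -/
def LeibnizIso {L M : Type*} [AddCommGroup L] [Module ℂ L] [AddCommGroup M] [Module ℂ M]
    (bL : L →ₗ[ℂ] L →ₗ[ℂ] L) (bM : M →ₗ[ℂ] M →ₗ[ℂ] M) : Prop :=
  ∃ e : L ≃ₗ[ℂ] M, ∀ x y : L, e (bL x y) = bM (e x) (e y)

/-- The nilradical of `(L, bL)` is isomorphic (as an algebra) to `(M, bM)`. -/
def NilradicalIso {L M : Type*} [AddCommGroup L] [Module ℂ L] [AddCommGroup M] [Module ℂ M]
    (bL : L →ₗ[ℂ] L →ₗ[ℂ] L) (bM : M →ₗ[ℂ] M →ₗ[ℂ] M) : Prop :=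
  ∃ I : Submodule ℂ L, IsNilradical bL I ∧
    ∃ f : M →ₗ[ℂ] L, Function.Injective f ∧ LinearMap.range f = I ∧
      ∀ x y : M, f (bM x y) = bL (f x) (f y)

/-- A derivation of the algebra `(L, b)`. -/
def IsDerivation {L : Type*} [AddCommGroup L] [Module ℂ L]
    (b : L →ₗ[ℂ] L →ₗ[ℂ] L) (d : L →ₗ[ℂ] L) : Prop :=
  ∀ x y : L, d (b x y) = b (d x) y + b x (d y)

/-- The bilinear bracket on `Fin n → ℂ` determined by structure constants `c`. -/
noncomputable def bilin (n : ℕ) (c : Fin n → Fin n → Fin n → ℂ) :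
    (Fin n → ℂ) →ₗ[ℂ] (Fin n → ℂ) →ₗ[ℂ] (Fin n → ℂ) :=
  LinearMap.mk₂ ℂ (fun x y k => ∑ i, ∑ j, x i * y j * c i j k)
    (by intro x x' y; funext k; simp [add_mul, Finset.sum_add_distrib])
    (by intro a x y; funext k; simp [Finset.mul_sum, mul_assoc])
    (by intro x y y'; funext k; simp [mul_add, add_mul, Finset.sum_add_distrib])
    (by intro a x y; funext k; simp [Finset.mul_sum, mul_assoc, mul_left_comm])

/-- The paper's basis vector `e_i` (1-indexed: valid for `1 ≤ i ≤ n`). -/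
noncomputable def E (n : ℕ) (i : ℕ) : Fin n → ℂ :=
  if h : 1 ≤ i ∧ i ≤ n then Pi.single (⟨i - 1, by omega⟩ : Fin n) 1 else 0

/-- Structure constants of the null-filiform algebra `NF_n`:
`[e_i, e_1] = e_{i+1}` for `1 ≤ i ≤ n-1` (indices are 0-based). -/
noncomputable def cNF (n : ℕ) : Fin n → Fin n → Fin n → ℂ := fun i j k =>
  if j.val = 0 ∧ k.val = i.val + 1 then 1 else 0

/-- Structure constants of `F_n^1`: `[e_1,e_1] = e_3`, `[e_i,e_1] = e_{i+1}` for `2 ≤ i ≤ n-1`. -/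
noncomputable def cF1 (n : ℕ) : Fin n → Fin n → Fin n → ℂ := fun i j k =>
  if j.val = 0 ∧ ((i.val = 0 ∧ k.val = 2) ∨ (1 ≤ i.val ∧ k.val = i.val + 1)) then 1 else 0

/-- Structure constants of `F_n^2`: `[e_1,e_1] = e_3`, `[e_i,e_1] = e_{i+1}` for `3 ≤ i ≤ n-1`. -/
noncomputable def cF2 (n : ℕ) : Fin n → Fin n → Fin n → ℂ := fun i j k =>
  if j.val = 0 ∧ ((i.val = 0 ∧ k.val = 2) ∨ (2 ≤ i.val ∧ k.val = i.val + 1)) then 1 else 0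

/-- Structure constants of the filiform Lie algebra `n_{n,1}`:
`[e_i,e_1] = -[e_1,e_i] = e_{i+1}` for `2 ≤ i ≤ n-1`. -/
noncomputable def cNn (n : ℕ) : Fin n → Fin n → Fin n → ℂ := fun i j k =>
  (if j.val = 0 ∧ 1 ≤ i.val ∧ k.val = i.val + 1 then 1 else 0)
  - (if i.val = 0 ∧ 1 ≤ j.val ∧ k.val = j.val + 1 then 1 else 0)

/-- Structure constants of the filiform Lie algebra `Q_{2n}` (on `Fin (2*n)`). -/
noncomputable def cQ (n : ℕ) : Fin (2*n) → Fin (2*n) → Fin (2*n) → ℂ := fun i j k =>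
  (if j.val = 0 ∧ 1 ≤ i.val ∧ i.val ≤ 2*n - 3 ∧ k.val = i.val + 1 then 1 else 0)
  - (if i.val = 0 ∧ 1 ≤ j.val ∧ j.val ≤ 2*n - 3 ∧ k.val = j.val + 1 then 1 else 0)
  + (if 1 ≤ i.val ∧ i.val ≤ n - 1 ∧ i.val + j.val = 2*n - 1 ∧ k.val = 2*n - 1
      then (-1 : ℂ)^(i.val + 1) else 0)
  - (if 1 ≤ j.val ∧ j.val ≤ n - 1 ∧ i.val + j.val = 2*n - 1 ∧ k.val = 2*n - 1
      then (-1 : ℂ)^(j.val + 1) else 0)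

/-- Structure constants of `R_{n+1,1}(γ₁,γ₂,γ₃)` (basis `e_1,…,e_n,x`; `x` has 0-based index `n`). -/
noncomputable def cRn (n : ℕ) (g1 g2 g3 : ℂ) : Fin (n+1) → Fin (n+1) → Fin (n+1) → ℂ := fun i j k =>
  (if j.val = 0 ∧ 1 ≤ i.val ∧ i.val ≤ n - 2 ∧ k.val = i.val + 1 then 1 else 0)
  - (if i.val = 0 ∧ 1 ≤ j.val ∧ j.val ≤ n - 2 ∧ k.val = j.val + 1 then 1 else 0)
  + (if i.val = 0 ∧ j.val = n ∧ k.val = 0 then 1 else 0)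
  - (if i.val = n ∧ j.val = 0 ∧ k.val = 0 then 1 else 0)
  + (if i.val = n ∧ j.val = 0 ∧ k.val = n - 1 then g1 else 0)
  + (if 1 ≤ i.val ∧ i.val ≤ n - 2 ∧ j.val = n ∧ k.val = i.val then ((i.val : ℂ) + 1 - n) else 0)
  + (if i.val = n ∧ 1 ≤ j.val ∧ j.val ≤ n - 2 ∧ k.val = j.val then ((n : ℂ) - j.val - 1) else 0)
  + (if i.val = n ∧ j.val = 1 ∧ k.val = n - 1 then g2 else 0)
  + (if i.val = n ∧ j.val = n ∧ k.val = n - 1 then g3 else 0)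

/-- Structure constants of `R_{2n+1,1}(γ₁,γ₂,γ₃)` (basis `e_1,…,e_{2n},x`; `x` has 0-based index `2n`). -/
noncomputable def cRQ (n : ℕ) (g1 g2 g3 : ℂ) : Fin (2*n+1) → Fin (2*n+1) → Fin (2*n+1) → ℂ := fun i j k =>
  (if j.val = 0 ∧ 1 ≤ i.val ∧ i.val ≤ 2*n - 3 ∧ k.val = i.val + 1 then 1 else 0)
  - (if i.val = 0 ∧ 1 ≤ j.val ∧ j.val ≤ 2*n - 3 ∧ k.val = j.val + 1 then 1 else 0)
  + (if 1 ≤ i.val ∧ i.val ≤ n - 1 ∧ i.val + j.val = 2*n - 1 ∧ k.val = 2*n - 1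
      then (-1 : ℂ)^(i.val + 1) else 0)
  - (if 1 ≤ j.val ∧ j.val ≤ n - 1 ∧ i.val + j.val = 2*n - 1 ∧ k.val = 2*n - 1
      then (-1 : ℂ)^(j.val + 1) else 0)
  + (if i.val = 0 ∧ j.val = 2*n ∧ k.val = 0 then 1 else 0)
  - (if i.val = 2*n ∧ j.val = 0 ∧ k.val = 0 then 1 else 0)
  + (if i.val = 2*n ∧ j.val = 0 ∧ k.val = n - 1 then g1 else 0)
  + (if 1 ≤ i.val ∧ i.val ≤ 2*n - 2 ∧ j.val = 2*n ∧ k.val = i.val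
      then ((2*n : ℂ) + 2*((i.val : ℂ) + 1) - 7)/2 else 0)
  - (if i.val = 2*n ∧ 1 ≤ j.val ∧ j.val ≤ 2*n - 2 ∧ k.val = j.val
      then ((2*n : ℂ) + 2*((j.val : ℂ) + 1) - 7)/2 else 0)
  + (if i.val = 2*n ∧ j.val = 1 ∧ k.val = n - 1 then g2 else 0)
  + (if i.val = 2*n ∧ j.val = 2*n ∧ k.val = n - 1 then g3 else 0)


section BracketTools

variable {L : Type*} [AddCommGroup L] [Module ℂ L] (b : L →ₗ[ℂ] L →ₗ[ℂ] L)

theorem mem_bracketSpan' {S T : Submodule ℂ L} {x y : L} (hx : x ∈ S) (hy : y ∈ T) :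
    b x y ∈ bracketSpan b S T :=
  Submodule.subset_span ⟨x, hx, y, hy, rfl⟩

theorem bracketSpan_le' {S T U : Submodule ℂ L}
    (h : ∀ x ∈ S, ∀ y ∈ T, b x y ∈ U) : bracketSpan b S T ≤ U := by
  rw [bracketSpan, Submodule.span_le]
  rintro z ⟨x, hx, y, hy, rfl⟩
  exact h x hx y hy

theorem bracketSpan_mono' {S S' T T' : Submodule ℂ L} (hS : S ≤ S') (hT : T ≤ T') :
    bracketSpan b S T ≤ bracketSpan b S' T' :=
  bracketSpan_le' b fun x hx y hy => mem_bracketSpan' b (hS hx) (hT hy)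

theorem bracketSpan_bot_left' (T : Submodule ℂ L) : bracketSpan b ⊥ T = ⊥ :=
  le_bot_iff.mp <| bracketSpan_le' b fun x hx y _ => by
    rw [Submodule.mem_bot] at hx ⊢; rw [hx]; simp

theorem bracketSpan_bot_right' (S : Submodule ℂ L) : bracketSpan b S ⊥ = ⊥ :=
  le_bot_iff.mp <| bracketSpan_le' b fun x _ y hy => by
    rw [Submodule.mem_bot] at hy ⊢; rw [hy]; simp

theorem bracketSpan_sup_right' (S T T' : Submodule ℂ L) :
    bracketSpan b S (T ⊔ T') ≤ bracketSpan b S T ⊔ bracketSpan b S T' :=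
  bracketSpan_le' b fun x hx y hy => by
    obtain ⟨t, ht, t', ht', rfl⟩ := Submodule.mem_sup.mp hy
    rw [map_add]
    exact Submodule.add_mem _ (Submodule.mem_sup_left (mem_bracketSpan' b hx ht))
      (Submodule.mem_sup_right (mem_bracketSpan' b hx ht'))

theorem bracketSpan_iSup_left' {ι : Sort*} (S : ι → Submodule ℂ L) (T : Submodule ℂ L) :
    bracketSpan b (⨆ i, S i) T ≤ ⨆ i, bracketSpan b (S i) T := by
  refine bracketSpan_le' b fun x hx y hy => ?_
  refine Submodule.iSup_induction (motive := fun x => b x y ∈ ⨆ i, bracketSpan b (S i) T) S hx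
    (fun i x hx => Submodule.mem_iSup_of_mem i (mem_bracketSpan' b hx hy)) (by simp)
    (fun u v hu hv => by simpa [map_add] using Submodule.add_mem _ hu hv)

theorem bracketSpan_span_singleton_right (S : Submodule ℂ L) (x : L) :
    bracketSpan b S (Submodule.span ℂ {x}) ≤ Submodule.map (b.flip x) S :=
  bracketSpan_le' b fun s hs y hy => by
    obtain ⟨t, rfl⟩ := Submodule.mem_span_singleton.mp hy
    rw [map_smul]
    exact Submodule.smul_mem _ t ⟨s, hs, rfl⟩

theorem map_bracketSpan_le' (f : L →ₗ[ℂ] L)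
    (hf : ∀ x y, f (b x y) = b (f x) y + b x (f y)) (S T : Submodule ℂ L) :
    Submodule.map f (bracketSpan b S T) ≤
      bracketSpan b (Submodule.map f S) T ⊔ bracketSpan b S (Submodule.map f T) := by
  rw [Submodule.map_le_iff_le_comap]
  refine bracketSpan_le' b fun x hx y hy => ?_
  rw [Submodule.mem_comap, hf]
  exact Submodule.add_mem _
    (Submodule.mem_sup_left (mem_bracketSpan' b ⟨x, hx, rfl⟩ hy))
    (Submodule.mem_sup_right (mem_bracketSpan' b hx ⟨y, hy, rfl⟩))

end BracketTools
section LieTheory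

variable {V : Type*} [AddCommGroup V] [Module ℂ V]

/-- The commutator bracket on endomorphisms, as a bilinear map. -/
noncomputable def commB (V : Type*) [AddCommGroup V] [Module ℂ V] :
    Module.End ℂ V →ₗ[ℂ] Module.End ℂ V →ₗ[ℂ] Module.End ℂ V :=
  LinearMap.mul ℂ (Module.End ℂ V) - (LinearMap.mul ℂ (Module.End ℂ V)).flip

theorem commB_apply (A B : Module.End ℂ V) : commB V A B = A * B - B * A := rfl

theorem commB_apply_apply (A B : Module.End ℂ V) (v : V) :
    commB V A B v = A (B v) - B (A v) := rfl

/-- Span of commutators. -/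
noncomputable def cSpan (S T : Submodule ℂ (Module.End ℂ V)) : Submodule ℂ (Module.End ℂ V) :=
  bracketSpan (commB V) S T

/-- Derived series of a subspace of endomorphisms. -/
noncomputable def dSer (S : Submodule ℂ (Module.End ℂ V)) : ℕ → Submodule ℂ (Module.End ℂ V)
  | 0 => S
  | k + 1 => cSpan (dSer S k) (dSer S k)

theorem dSer_mono {S T : Submodule ℂ (Module.End ℂ V)} (h : S ≤ T) (k : ℕ) :
    dSer S k ≤ dSer T k := by
  induction k with
  | zero => exact h
  | succ k ih => exact bracketSpan_mono' _ ih ih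

end LieTheory
section LieTheory2

variable {V : Type*} [AddCommGroup V] [Module ℂ V] [FiniteDimensional ℂ V]

theorem weight_space_invariant
    (I S : Submodule ℂ (Module.End ℂ V)) (hIS : I ≤ S) (hC : cSpan S S ≤ I)
    (χ : Module.End ℂ V → ℂ) (W : Submodule ℂ V)
    (hW : ∀ v : V, v ∈ W ↔ ∀ B ∈ I, B v = χ B • v)
    {A : Module.End ℂ V} (hA : A ∈ S) {w : V} (hw : w ∈ W) : A w ∈ W := by
  classical
  rcases eq_or_ne w 0 with rfl | hw0
  · simpa using W.zero_mem
  have hU := fun k : ℕ => (rfl :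
    Submodule.span ℂ ((fun j => (A ^ j) w) '' Set.Iio k) =
    Submodule.span ℂ ((fun j => (A ^ j) w) '' Set.Iio k))
  set U : ℕ → Submodule ℂ V := fun k => Submodule.span ℂ ((fun j => (A ^ j) w) '' Set.Iio k)
    with hUdef
  have hUmono : Monotone U := fun k k' hk =>
    Submodule.span_mono (Set.image_mono (fun j hj => lt_of_lt_of_le hj hk))
  have hUmem : ∀ {j k : ℕ}, j < k → (A ^ j) w ∈ U k := fun {j k} hj =>
    Submodule.subset_span ⟨j, hj, rfl⟩
  have hpow : ∀ j : ℕ, (A ^ (j + 1)) w = A ((A ^ j) w) := by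
    intro j; rw [pow_succ', Module.End.mul_apply]
  have hUmap : ∀ k, Submodule.map A (U k) ≤ U (k + 1) := by
    intro k
    simp only [hUdef, Submodule.map_span, Submodule.span_le]
    rintro z ⟨u, ⟨j, hj, rfl⟩, rfl⟩
    rw [← hpow j]
    exact hUmem (by simpa using Nat.succ_lt_succ (Set.mem_Iio.mp hj))
  have hstab : ∃ k, (A ^ k) w ∈ U k := by
    by_contra hcon
    push_neg at hcon
    have hstrict : ∀ k, U k < U (k + 1) := by
      intro k
      refine lt_of_le_of_ne (hUmono (Nat.le_succ k)) (fun h => hcon k ?_)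
      rw [h]
      exact hUmem (Nat.lt_succ_self k)
    have hrank : ∀ k, k ≤ Module.finrank ℂ (U k) := by
      intro k; induction k with
      | zero => exact Nat.zero_le _
      | succ k ih => exact Nat.lt_of_le_of_lt ih (Submodule.finrank_lt_finrank_of_lt (hstrict k))
    have h1 := hrank (Module.finrank ℂ V + 1)
    have h2 := Submodule.finrank_le (U (Module.finrank ℂ V + 1))
    omega
  have hnmem : (A ^ (Nat.find hstab)) w ∈ U (Nat.find hstab) := Nat.find_spec hstab
  set n := Nat.find hstab with hndef
  have hnmin : ∀ j, j < n → (A ^ j) w ∉ U j := fun j hj => Nat.find_min hstab hj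
  have hnpos : 0 < n := by
    rcases Nat.eq_zero_or_pos n with h0 | h
    · exfalso
      rw [h0] at hnmem
      have : U 0 = ⊥ := by
        show Submodule.span ℂ ((fun j => (A ^ j) w) '' Set.Iio 0) = ⊥
        have he : Set.Iio (0 : ℕ) = ∅ := by ext i; simp
        rw [he, Set.image_empty, Submodule.span_empty]
      rw [this] at hnmem
      simp at hnmem
      exact hw0 hnmem
    · exact h
  have hUn_Ainv : ∀ u ∈ U n, A u ∈ U n := by
    have h2 : U (n + 1) ≤ U n := by
      simp only [hUdef, Submodule.span_le]
      rintro z ⟨j, hj, rfl⟩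
      rcases Nat.lt_or_ge j n with h | h
      · exact hUmem h
      · have hjn : j = n := by have := Set.mem_Iio.mp hj; omega
        rw [hjn]; exact hnmem
    intro u hu
    exact h2 (hUmap n ⟨u, hu, rfl⟩)
  have claim3 : ∀ j, ∀ B ∈ I, B ((A ^ j) w) - χ B • ((A ^ j) w) ∈ U j := by
    intro j
    induction j with
    | zero =>
      intro B hB
      simp only [pow_zero, Module.End.one_apply]
      rw [(hW w).mp hw B hB]
      simp
    | succ j ih =>
      intro B hB
      have hBA : commB V A B ∈ I := hC (mem_bracketSpan' _ hA (hIS hB))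
      have key : B ((A ^ (j + 1)) w) - χ B • ((A ^ (j + 1)) w)
          = A (B ((A ^ j) w) - χ B • (A ^ j) w) - (commB V A B) ((A ^ j) w) := by
        rw [commB_apply_apply, hpow j, map_sub, map_smul]
        abel
      rw [key]
      refine Submodule.sub_mem _ (hUmap j ⟨_, ih B hB, rfl⟩) ?_
      have h2 := ih (commB V A B) hBA
      have h3 : (commB V A B) ((A ^ j) w) = (χ (commB V A B)) • ((A ^ j) w)
          + ((commB V A B) ((A ^ j) w) - χ (commB V A B) • ((A ^ j) w)) := by abel
      rw [h3]
      exact Submodule.add_mem _ (Submodule.smul_mem _ _ (hUmem (Nat.lt_succ_self j)))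
        (hUmono (Nat.le_succ j) h2)
  have hUn_Binv : ∀ B ∈ I, ∀ u ∈ U n, B u ∈ U n := by
    intro B hB u hu
    induction hu using Submodule.span_induction with
    | mem z hz =>
      obtain ⟨j, hj, rfl⟩ := hz
      have hjn : j < n := Set.mem_Iio.mp hj
      have : B ((A ^ j) w) = (B ((A ^ j) w) - χ B • (A ^ j) w) + χ B • (A ^ j) w := by abel
      rw [this]
      exact Submodule.add_mem _ (hUmono hjn.le (claim3 j B hB))
        (Submodule.smul_mem _ _ (hUmem hjn))
    | zero => simp
    | add x y hx hy ihx ihy => rw [map_add]; exact Submodule.add_mem _ ihx ihy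
    | smul a x hx ihx => rw [map_smul]; exact Submodule.smul_mem _ _ ihx
  -- linear independence of w, Aw, ..., A^{n-1} w
  have hrange : ∀ k : ℕ, Set.range (fun j : Fin k => (A ^ (j : ℕ)) w)
      = (fun j => (A ^ j) w) '' Set.Iio k := by
    intro k; ext z; constructor
    · rintro ⟨j, rfl⟩; exact ⟨j, j.isLt, rfl⟩
    · rintro ⟨j, hj, rfl⟩; exact ⟨⟨j, Set.mem_Iio.mp hj⟩, rfl⟩
  have hli : ∀ k : ℕ, k ≤ n → LinearIndependent ℂ (fun j : Fin k => (A ^ (j : ℕ)) w) := by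
    intro k
    induction k with
    | zero => intro _; exact linearIndependent_empty_type
    | succ k ih =>
      intro hk
      have heq : (fun j : Fin (k + 1) => (A ^ (j : ℕ)) w)
          = Fin.snoc (fun j : Fin k => (A ^ (j : ℕ)) w) ((A ^ k) w) := by
        funext j
        refine Fin.lastCases ?_ ?_ j
        · simp
        · intro i; simp
      rw [heq, linearIndependent_fin_snoc]
      refine ⟨ih (by omega), ?_⟩
      rw [hrange k]
      exact hnmin k (by omega)
  have hliN := hli n le_rfl
  have hspan : Submodule.span ℂ (Set.range (fun j : Fin n => (A ^ (j : ℕ)) w)) = U n := by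
    rw [hrange n]
  let bU : Basis (Fin n) ℂ (U n) := (Basis.span hliN).map (LinearEquiv.ofEq _ _ hspan)
  have hbU : ∀ j : Fin n, (bU j : V) = (A ^ (j : ℕ)) w := by
    intro j
    simp only [bU, Basis.map_apply, LinearEquiv.coe_ofEq_apply]
    exact congrArg Subtype.val (Basis.span_apply hliN j)
  -- coordinates above the index vanish on lower steps
  have hrep0 : ∀ (j : Fin n) (u : U n), (u : V) ∈ U (j : ℕ) → bU.repr u j = 0 := by
    intro j u hu
    have hker : U (j : ℕ) ≤ Submodule.map (U n).subtype (LinearMap.ker (bU.coord j)) := by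
      simp only [hUdef, Submodule.span_le]
      rintro z ⟨i, hi, rfl⟩
      have hin : i < n := lt_of_lt_of_le (Set.mem_Iio.mp hi) j.isLt.le
      refine ⟨bU ⟨i, hin⟩, ?_, hbU ⟨i, hin⟩⟩
      have hij : (⟨i, hin⟩ : Fin n) ≠ j := by
        intro h
        have := congrArg Fin.val h
        simp only at this
        have := Set.mem_Iio.mp hi
        omega
      have hval : bU.repr (bU ⟨i, hin⟩) j = 0 := by
        rw [Basis.repr_self]
        exact Finsupp.single_eq_of_ne' hij
      simpa [LinearMap.mem_ker, Basis.coord_apply] using hval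
    obtain ⟨z, hz, hzu⟩ := hker hu
    have : z = u := Subtype.ext hzu
    rw [← this] at *
    rw [← Basis.coord_apply]
    exact hz
  -- diagonal entries of triangular operators
  have hdiag : ∀ B, ∀ hB : B ∈ I, ∀ j : Fin n,
      bU.repr ((B.restrict (fun u hu => hUn_Binv B hB u hu)) (bU j)) j = χ B := by
    intro B hB j
    have hmemj : (B ((A ^ (j : ℕ)) w) - χ B • (A ^ (j : ℕ)) w) ∈ U n :=
      hUmono j.isLt.le (claim3 j B hB)
    have hsplit : (B.restrict (fun u hu => hUn_Binv B hB u hu)) (bU j)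
        = χ B • bU j + ⟨B ((A ^ (j : ℕ)) w) - χ B • (A ^ (j : ℕ)) w, hmemj⟩ := by
      apply Subtype.ext
      simp only [LinearMap.restrict_apply, Submodule.coe_add, Submodule.coe_smul, hbU j]
      abel
    rw [hsplit, map_add, map_smul, Finsupp.add_apply, Finsupp.smul_apply, Basis.repr_self,
      Finsupp.single_eq_same, hrep0 j _ (claim3 j B hB)]
    simp
  have htrace : ∀ B, ∀ hB : B ∈ I,
      LinearMap.trace ℂ (U n) (B.restrict (fun u hu => hUn_Binv B hB u hu)) = n • χ B := by
    intro B hB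
    classical
    rw [LinearMap.trace_eq_matrix_trace ℂ bU]
    rw [Matrix.trace]
    have : ∀ j : Fin n, Matrix.diag (LinearMap.toMatrix bU bU
        (B.restrict (fun u hu => hUn_Binv B hB u hu))) j = χ B := by
      intro j
      rw [Matrix.diag_apply, LinearMap.toMatrix_apply]
      exact hdiag B hB j
    rw [Finset.sum_congr rfl (fun j _ => this j)]
    simp [Finset.card_univ]
  have hχcomm : ∀ B ∈ I, χ (commB V A B) = 0 := by
    intro B hB
    have hE : commB V A B ∈ I := hC (mem_bracketSpan' _ hA (hIS hB))
    have hER : (commB V A B).restrict (fun u hu => hUn_Binv _ hE u hu)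
        = (A.restrict (fun u (hu : u ∈ U n) => hUn_Ainv u hu))
            * (B.restrict (fun u hu => hUn_Binv B hB u hu))
          - (B.restrict (fun u hu => hUn_Binv B hB u hu))
            * (A.restrict (fun u (hu : u ∈ U n) => hUn_Ainv u hu)) := by
      ext u
      simp only [LinearMap.sub_apply, Module.End.mul_apply, LinearMap.restrict_apply,
        Submodule.coe_sub, commB_apply_apply]
    have h0 : LinearMap.trace ℂ (U n) ((commB V A B).restrict (fun u hu => hUn_Binv _ hE u hu))
        = 0 := by
      rw [hER, map_sub, LinearMap.trace_mul_comm]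
      exact sub_self _
    have h1 := htrace _ hE
    rw [h0] at h1
    have hn0 : (n : ℂ) ≠ 0 := by
      exact_mod_cast (Nat.pos_iff_ne_zero.mp hnpos)
    have : (n : ℂ) * χ (commB V A B) = 0 := by
      rw [nsmul_eq_mul] at h1
      exact h1.symm
    exact (mul_eq_zero.mp this).resolve_left hn0
  -- conclude
  rw [hW]
  intro B hB
  have hBA : commB V A B ∈ I := hC (mem_bracketSpan' _ hA (hIS hB))
  have h1 : B (A w) = A (B w) - (commB V A B) w := by
    rw [commB_apply_apply]; abel
  rw [h1, (hW w).mp hw B hB, (hW w).mp hw _ hBA, hχcomm B hB, map_smul]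
  simp

end LieTheory2
section LieTheory3

variable {V : Type*} [AddCommGroup V] [Module ℂ V]

/-- For any nonzero vector there is a functional taking value 1 on it. -/
theorem exists_dual_one {Q : Type*} [AddCommGroup Q] [Module ℂ Q] {v : Q} (hv : v ≠ 0) :
    ∃ φ : Q →ₗ[ℂ] ℂ, φ v = 1 := by
  obtain ⟨P, hP⟩ := Submodule.exists_isCompl (Submodule.span ℂ {v})
  let π := Submodule.linearProjOfIsCompl _ _ hP
  let e := LinearEquiv.toSpanNonzeroSingleton ℂ Q v hv
  refine ⟨(e.symm : Submodule.span ℂ {v} →ₗ[ℂ] ℂ).comp π, ?_⟩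
  have h1 : π v = ⟨v, Submodule.mem_span_singleton_self v⟩ :=
    Submodule.linearProjOfIsCompl_apply_left hP ⟨v, Submodule.mem_span_singleton_self v⟩
  have h2 : e 1 = ⟨v, Submodule.mem_span_singleton_self v⟩ := by
    apply Subtype.ext
    simp [e, LinearEquiv.toSpanNonzeroSingleton]
  simp only [LinearMap.coe_comp, Function.comp_apply, h1, ← h2]
  exact e.symm_apply_apply 1

theorem lie_eigenvector_aux [FiniteDimensional ℂ V] [Nontrivial V] (n : ℕ) :
    ∀ S : Submodule ℂ (Module.End ℂ V), Module.finrank ℂ S ≤ n → cSpan S S ≤ S →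
      (∃ k, dSer S k = ⊥) →
      ∃ v : V, v ≠ 0 ∧ ∀ A ∈ S, ∃ c : ℂ, A v = c • v := by
  induction n with
  | zero =>
    intro S hrank _ _
    obtain ⟨v, hv⟩ := exists_ne (0 : V)
    have hS : S = ⊥ := Submodule.finrank_eq_zero.mp (Nat.le_zero.mp hrank)
    refine ⟨v, hv, fun A hA => ⟨0, ?_⟩⟩
    rw [hS, Submodule.mem_bot] at hA
    rw [hA]; simp
  | succ n IH =>
    intro S hrank hcl hsolv
    rcases eq_or_ne S ⊥ with hS | hS
    · obtain ⟨v, hv⟩ := exists_ne (0 : V)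
      refine ⟨v, hv, fun A hA => ⟨0, ?_⟩⟩
      rw [hS, Submodule.mem_bot] at hA
      rw [hA]; simp
    have hlt : cSpan S S < S := by
      refine lt_of_le_of_ne hcl (fun heq => hS ?_)
      obtain ⟨k, hk⟩ := hsolv
      have hall : ∀ j, dSer S j = S := by
        intro j; induction j with
        | zero => rfl
        | succ j ih => show cSpan (dSer S j) (dSer S j) = S; rw [ih]; exact heq
      rw [hall k] at hk; exact hk
    set C₀ : Submodule ℂ S := (cSpan S S).comap S.subtype with hC₀
    have hC₀top : C₀ ≠ ⊤ := by
      intro h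
      apply hlt.ne
      apply le_antisymm hcl
      intro z hz
      have hmem : (⟨z, hz⟩ : S) ∈ C₀ := h ▸ Submodule.mem_top
      exact hmem
    have hQnt : Nontrivial (S ⧸ C₀) :=
      Submodule.Quotient.nontrivial_iff.mpr (lt_top_iff_ne_top.mpr hC₀top).ne
    obtain ⟨q0, hq0⟩ := exists_ne (0 : S ⧸ C₀)
    obtain ⟨ψ, hψ⟩ := exists_dual_one hq0
    obtain ⟨a₀, ha₀⟩ := Submodule.mkQ_surjective C₀ q0
    set φ : S →ₗ[ℂ] ℂ := ψ.comp C₀.mkQ with hφ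
    have hφa₀ : φ a₀ = 1 := by simp [hφ, ha₀, hψ]
    set H : Submodule ℂ S := LinearMap.ker φ with hH
    have hCH : C₀ ≤ H := by
      intro z hz
      have : C₀.mkQ z = 0 := (Submodule.Quotient.mk_eq_zero C₀).mpr hz
      simp [hH, LinearMap.mem_ker, hφ, this]
    have ha₀H : a₀ ∉ H := by
      simp [hH, LinearMap.mem_ker, hφa₀]
    have hHsup : H ⊔ Submodule.span ℂ {a₀} = ⊤ := by
      rw [eq_top_iff]
      intro s _
      have hker : s - φ s • a₀ ∈ H := by
        simp [hH, LinearMap.mem_ker, map_sub, map_smul, hφa₀]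
      have hdecomp : s = (s - φ s • a₀) + φ s • a₀ := by abel
      rw [hdecomp]
      exact Submodule.add_mem _ (Submodule.mem_sup_left hker)
        (Submodule.mem_sup_right (Submodule.smul_mem _ _ (Submodule.mem_span_singleton_self a₀)))
    set I : Submodule ℂ (Module.End ℂ V) := H.map S.subtype with hI
    have hIS : I ≤ S := by
      rw [hI]; rintro z ⟨u, _, rfl⟩; exact u.2
    have hCI : cSpan S S ≤ I := by
      intro z hz
      exact ⟨⟨z, hcl hz⟩, hCH hz, rfl⟩
    have hA₀S : (a₀ : Module.End ℂ V) ∈ S := a₀.2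
    have hA₀I : (a₀ : Module.End ℂ V) ∉ I := by
      rintro ⟨u, hu, huv⟩
      have : u = a₀ := Subtype.ext huv
      rw [this] at hu; exact ha₀H hu
    have hIltS : I < S := by
      refine lt_of_le_of_ne hIS (fun h => hA₀I ?_)
      rw [h]; exact hA₀S
    have hrankI : Module.finrank ℂ I ≤ n := by
      have := Submodule.finrank_lt_finrank_of_lt hIltS
      omega
    have hsolvI : ∃ k, dSer I k = ⊥ := by
      obtain ⟨k, hk⟩ := hsolv
      exact ⟨k, le_bot_iff.mp (hk ▸ dSer_mono hIS k)⟩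
    have hclI : cSpan I I ≤ I := le_trans (bracketSpan_mono' _ hIS hIS) hCI
    obtain ⟨v₀, hv₀, heig⟩ := IH I hrankI hclI hsolvI
    obtain ⟨φ₀, hφ₀⟩ := exists_dual_one hv₀
    set χ : Module.End ℂ V → ℂ := fun A => φ₀ (A v₀) with hχ
    have hχI : ∀ B ∈ I, B v₀ = χ B • v₀ := by
      intro B hB
      obtain ⟨c, hc⟩ := heig B hB
      have hcB : χ B = c := by rw [hχ]; simp [hc, hφ₀]
      rw [hcB, hc]
    set W : Submodule ℂ V :=
      ⨅ B : I, LinearMap.ker ((B : Module.End ℂ V) - χ B • (1 : Module.End ℂ V)) with hWdef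
    have hWmem : ∀ v : V, v ∈ W ↔ ∀ B ∈ I, B v = χ B • v := by
      intro v
      rw [hWdef]
      simp only [Submodule.mem_iInf, LinearMap.mem_ker, LinearMap.sub_apply, LinearMap.smul_apply,
        Module.End.one_apply, sub_eq_zero]
      constructor
      · intro h B hB; exact h ⟨B, hB⟩
      · intro h B; exact h B B.2
    have hv₀W : v₀ ∈ W := (hWmem v₀).mpr hχI
    have hWinv : ∀ A ∈ S, ∀ u ∈ W, A u ∈ W := fun A hA u hu =>
      weight_space_invariant I S hIS hCI χ W hWmem hA hu
    have hWnt : Nontrivial W := by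
      refine ⟨⟨v₀, hv₀W⟩, 0, ?_⟩
      simp [Subtype.ext_iff, hv₀]
    set A₀ : Module.End ℂ V := (a₀ : Module.End ℂ V) with hA₀
    set AR : Module.End ℂ W := A₀.restrict (fun u hu => hWinv A₀ hA₀S u hu) with hAR
    obtain ⟨c, hc⟩ := Module.End.exists_eigenvalue AR
    obtain ⟨vv, hvv⟩ := hc.exists_hasEigenvector
    have hvvne : (vv : V) ≠ 0 := fun h => hvv.2 (Subtype.ext h)
    have hsupS : I ⊔ Submodule.span ℂ {A₀} = S := by
      have hmapped := congrArg (Submodule.map S.subtype) hHsup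
      rwa [Submodule.map_sup, Submodule.map_span, Set.image_singleton, Submodule.map_top,
        Submodule.range_subtype] at hmapped
    refine ⟨(vv : V), hvvne, fun A hA => ?_⟩
    rw [← hsupS] at hA
    obtain ⟨B, hB, u, hu, rfl⟩ := Submodule.mem_sup.mp hA
    obtain ⟨t, rfl⟩ := Submodule.mem_span_singleton.mp hu
    refine ⟨χ B + t * c, ?_⟩
    have h1 : B (vv : V) = χ B • (vv : V) := (hWmem _).mp vv.2 B hB
    have h2 : A₀ (vv : V) = c • (vv : V) := by
      have h3 := hvv.apply_eq_smul
      calc A₀ (vv : V) = ((AR vv : W) : V) := (LinearMap.restrict_coe_apply _ _ _).symm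
        _ = ((c • vv : W) : V) := by rw [h3]
        _ = c • (vv : V) := rfl
    rw [LinearMap.add_apply, LinearMap.smul_apply, h1, h2, add_smul, smul_smul]

end LieTheory3
section LieTheory4

universe u

theorem flag_of_subsingleton (V : Type u) [AddCommGroup V] [Module ℂ V]
    (hsub : Subsingleton V) (S : Submodule ℂ (Module.End ℂ V)) :
    ∃ n, ∃ F : ℕ → Submodule ℂ V, F 0 = ⊥ ∧ F n = ⊤ ∧
      (∀ i, ∀ A ∈ S, Submodule.map A (F i) ≤ F i) ∧
      (∀ i, ∀ A ∈ cSpan S S, Submodule.map A (F (i + 1)) ≤ F i) := by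
  refine ⟨0, fun _ => ⊥, rfl, ?_, ?_, ?_⟩
  · rw [eq_top_iff]
    intro x _
    rw [Subsingleton.elim x 0]
    exact Submodule.zero_mem _
  · intro i A _; rw [Submodule.map_bot]
  · intro i A _; rw [Submodule.map_bot]

theorem lie_flag_aux (k : ℕ) :
    ∀ (V : Type u) [AddCommGroup V] [Module ℂ V] [FiniteDimensional ℂ V],
      Module.finrank ℂ V ≤ k →
      ∀ S : Submodule ℂ (Module.End ℂ V), cSpan S S ≤ S → (∃ j, dSer S j = ⊥) →
      ∃ n, ∃ F : ℕ → Submodule ℂ V, F 0 = ⊥ ∧ F n = ⊤ ∧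
        (∀ i, ∀ A ∈ S, Submodule.map A (F i) ≤ F i) ∧
        (∀ i, ∀ A ∈ cSpan S S, Submodule.map A (F (i + 1)) ≤ F i) := by
  induction k with
  | zero =>
    intro V _ _ _ hrank S _ _
    exact flag_of_subsingleton V (Module.finrank_zero_iff.mp (Nat.le_zero.mp hrank)) S
  | succ k IH =>
    intro V _ _ _ hrank S hcl hsolv
    rcases subsingleton_or_nontrivial V with hsub | hnt
    · exact flag_of_subsingleton V hsub S
    obtain ⟨v, hv0, heig⟩ :=
      lie_eigenvector_aux (Module.finrank ℂ S) S le_rfl hcl hsolv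
    set W₁ : Submodule ℂ V := Submodule.span ℂ {v} with hW₁
    have hW₁inv : ∀ A ∈ S, ∀ u ∈ W₁, A u ∈ W₁ := by
      intro A hA u hu
      obtain ⟨t, rfl⟩ := Submodule.mem_span_singleton.mp hu
      obtain ⟨c, hc⟩ := heig A hA
      rw [map_smul, hc]
      exact Submodule.smul_mem _ _ (Submodule.smul_mem _ _ (Submodule.mem_span_singleton_self v))
    have hcomm0 : ∀ A ∈ cSpan S S, A v = 0 := by
      have hev : ∀ A ∈ cSpan S S, A ∈ LinearMap.ker
          ({ toFun := fun A : Module.End ℂ V => A v,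
             map_add' := fun _ _ => rfl,
             map_smul' := fun _ _ => rfl } : Module.End ℂ V →ₗ[ℂ] V) := by
        refine fun A hA => bracketSpan_le' _ ?_ hA
        intro X hX Y hY
        obtain ⟨c, hc⟩ := heig X hX
        obtain ⟨c', hc'⟩ := heig Y hY
        rw [LinearMap.mem_ker]
        show (commB V X Y) v = 0
        rw [commB_apply_apply, hc, hc', map_smul, map_smul, hc, hc', smul_smul, smul_smul,
          mul_comm]
        exact sub_self _
      intro A hA
      exact hev A hA
    have hcommW₁ : ∀ A ∈ cSpan S S, ∀ u ∈ W₁, A u = 0 := by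
      intro A hA u hu
      obtain ⟨t, rfl⟩ := Submodule.mem_span_singleton.mp hu
      rw [map_smul, hcomm0 A hA, smul_zero]
    have hrankQ : Module.finrank ℂ (V ⧸ W₁) ≤ k := by
      have h1 := Submodule.finrank_quotient_add_finrank W₁
      have h2 : Module.finrank ℂ W₁ = 1 := finrank_span_singleton hv0
      omega
    set mk : V →ₗ[ℂ] V ⧸ W₁ := W₁.mkQ with hmk
    -- transfer maps
    set T : Module.End ℂ V →ₗ[ℂ] (V →ₗ[ℂ] V ⧸ W₁) :=
      { toFun := fun A => mk.comp A,
        map_add' := fun A B => by ext u; simp,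
        map_smul' := fun t A => by ext u; simp } with hT
    set Ψ : Module.End ℂ (V ⧸ W₁) →ₗ[ℂ] (V →ₗ[ℂ] V ⧸ W₁) :=
      { toFun := fun g => g.comp mk,
        map_add' := fun g h => by ext u; simp,
        map_smul' := fun t g => by ext u; simp } with hΨ
    set S' : Submodule ℂ (Module.End ℂ (V ⧸ W₁)) := Submodule.comap Ψ (Submodule.map T S)
      with hS'
    have hmemS' : ∀ g, g ∈ S' ↔ ∃ A ∈ S, ∀ u, mk (A u) = g (mk u) := by
      intro g
      rw [hS', Submodule.mem_comap, Submodule.mem_map]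
      constructor
      · rintro ⟨A, hA, hTA⟩
        exact ⟨A, hA, fun u => by
          have := LinearMap.congr_fun hTA u
          simpa [hT, hΨ] using this⟩
      · rintro ⟨A, hA, hpt⟩
        refine ⟨A, hA, ?_⟩
        ext u
        simpa [hT, hΨ] using hpt u
    have hmapQ_mem : ∀ A, ∀ hA : A ∈ S,
        W₁.mapQ W₁ A (fun u hu => hW₁inv A hA u hu) ∈ S' := by
      intro A hA
      refine (hmemS' _).mpr ⟨A, hA, fun u => ?_⟩
      rw [hmk, Submodule.mkQ_apply, Submodule.mkQ_apply, Submodule.mapQ_apply]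
    have hcommQpt : ∀ (g h : Module.End ℂ (V ⧸ W₁)) (A B : Module.End ℂ V),
        (∀ u, mk (A u) = g (mk u)) → (∀ u, mk (B u) = h (mk u)) →
        ∀ u, mk ((commB V A B) u) = (commB (V ⧸ W₁) g h) (mk u) := by
      intro g h A B hgA hhB u
      rw [commB_apply_apply, commB_apply_apply, map_sub, hgA (B u), hhB (A u), hhB u, hgA u]
    have hS'cl : cSpan S' S' ≤ S' := by
      refine bracketSpan_le' _ fun g hg h hh => ?_
      obtain ⟨A, hA, hgA⟩ := (hmemS' g).mp hg
      obtain ⟨B, hB, hhB⟩ := (hmemS' h).mp hh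
      exact (hmemS' _).mpr ⟨commB V A B, hcl (mem_bracketSpan' _ hA hB),
        hcommQpt g h A B hgA hhB⟩
    have hdser : ∀ j, dSer S' j ≤ Submodule.comap Ψ (Submodule.map T (dSer S j)) := by
      intro j
      induction j with
      | zero => exact le_rfl
      | succ j ihj =>
        refine bracketSpan_le' _ fun g hg h hh => ?_
        obtain ⟨A, hA, hTA⟩ := Submodule.mem_map.mp (Submodule.mem_comap.mp (ihj hg))
        obtain ⟨B, hB, hTB⟩ := Submodule.mem_map.mp (Submodule.mem_comap.mp (ihj hh))
        have hgA : ∀ u, mk (A u) = g (mk u) := fun u => by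
          have := LinearMap.congr_fun hTA u; simpa [hT, hΨ] using this
        have hhB : ∀ u, mk (B u) = h (mk u) := fun u => by
          have := LinearMap.congr_fun hTB u; simpa [hT, hΨ] using this
        rw [Submodule.mem_comap, Submodule.mem_map]
        refine ⟨commB V A B, mem_bracketSpan' _ hA hB, ?_⟩
        ext u
        simpa [hT, hΨ] using hcommQpt g h A B hgA hhB u
    have hS'solv : ∃ j, dSer S' j = ⊥ := by
      obtain ⟨j, hj⟩ := hsolv
      refine ⟨j, le_bot_iff.mp ?_⟩
      intro g hg
      have := hdser j hg
      rw [hj, Submodule.map_bot, Submodule.mem_comap, Submodule.mem_bot] at this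
      rw [Submodule.mem_bot]
      ext q
      have := LinearMap.congr_fun this q
      simpa [hΨ, hmk] using this
    obtain ⟨n', F', hF0, hFtop, hFinv, hFlow⟩ :=
      IH (V ⧸ W₁) hrankQ S' hS'cl hS'solv
    set F : ℕ → Submodule ℂ V := fun i => match i with
      | 0 => ⊥
      | (i + 1) => Submodule.comap mk (F' i) with hF
    have hstep : ∀ A ∈ cSpan S S, ∃ g ∈ cSpan S' S', ∀ u, mk (A u) = g (mk u) := by
      intro A hA
      have hX : cSpan S S ≤ Submodule.comap T (Submodule.map Ψ (cSpan S' S')) := by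
        refine bracketSpan_le' _ fun X hX Y hY => ?_
        rw [Submodule.mem_comap, Submodule.mem_map]
        refine ⟨commB (V ⧸ W₁) (W₁.mapQ W₁ X (fun u hu => hW₁inv X hX u hu))
          (W₁.mapQ W₁ Y (fun u hu => hW₁inv Y hY u hu)),
          mem_bracketSpan' _ (hmapQ_mem X hX) (hmapQ_mem Y hY), ?_⟩
        ext u
        have h1 : ∀ u, mk (X u) = (W₁.mapQ W₁ X (fun u hu => hW₁inv X hX u hu)) (mk u) :=
          fun u => by rw [hmk, Submodule.mkQ_apply, Submodule.mkQ_apply, Submodule.mapQ_apply]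
        have h2 : ∀ u, mk (Y u) = (W₁.mapQ W₁ Y (fun u hu => hW₁inv Y hY u hu)) (mk u) :=
          fun u => by rw [hmk, Submodule.mkQ_apply, Submodule.mkQ_apply, Submodule.mapQ_apply]
        simpa [hT, hΨ] using (hcommQpt _ _ X Y h1 h2 u).symm
      have := hX hA
      rw [Submodule.mem_comap, Submodule.mem_map] at this
      obtain ⟨g, hg, hΨg⟩ := this
      refine ⟨g, hg, fun u => ?_⟩
      have := LinearMap.congr_fun hΨg u
      simpa [hT, hΨ] using this.symm
    refine ⟨n' + 1, F, rfl, ?_, ?_, ?_⟩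
    · show Submodule.comap mk (F' n') = ⊤
      rw [hFtop, Submodule.comap_top]
    · intro i A hA
      match i with
      | 0 => rw [Submodule.map_bot]
      | (i + 1) =>
        rintro z ⟨u, hu, rfl⟩
        show A u ∈ Submodule.comap mk (F' i)
        have h1 : mk (A u) = (W₁.mapQ W₁ A (fun u hu => hW₁inv A hA u hu)) (mk u) := by
          rw [hmk, Submodule.mkQ_apply, Submodule.mkQ_apply, Submodule.mapQ_apply]
        rw [Submodule.mem_comap, h1]
        exact hFinv i _ (hmapQ_mem A hA) ⟨mk u, hu, rfl⟩
    · intro i A hA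
      match i with
      | 0 =>
        rintro z ⟨u, hu, rfl⟩
        show A u ∈ (⊥ : Submodule ℂ V)
        rw [Submodule.mem_bot]
        refine hcommW₁ A hA u ?_
        have hmem : mk u ∈ F' 0 := hu
        rw [hF0, Submodule.mem_bot] at hmem
        rwa [hmk, Submodule.mkQ_apply, Submodule.Quotient.mk_eq_zero] at hmem
      | (i + 1) =>
        rintro z ⟨u, hu, rfl⟩
        show A u ∈ Submodule.comap mk (F' i)
        obtain ⟨g, hg, hpt⟩ := hstep A hA
        rw [Submodule.mem_comap, hpt u]
        exact hFlow i g hg ⟨mk u, hu, rfl⟩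

end LieTheory4
section LeibnizDerived

variable {L : Type*} [AddCommGroup L] [Module ℂ L]

theorem leibniz_flip_comm (b : L →ₗ[ℂ] L →ₗ[ℂ] L) (hb : IsLeibniz b) (x y : L) :
    commB L (b.flip x) (b.flip y) = b.flip (b y x) := by
  ext w
  rw [commB_apply_apply]
  simp only [LinearMap.flip_apply]
  rw [hb w y x]

theorem derived_le_nilradical [FiniteDimensional ℂ L]
    (b : L →ₗ[ℂ] L →ₗ[ℂ] L) (hb : IsLeibniz b) (hsolv : IsSolvableAlg b)
    (N : Submodule ℂ L) (hN : IsNilradical b N) :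
    derSeries b 1 ≤ N := by
  set S : Submodule ℂ (Module.End ℂ L) := Submodule.map b.flip ⊤ with hS
  have hScl : cSpan S S ≤ S := by
    refine bracketSpan_le' _ ?_
    rintro X ⟨x, -, rfl⟩ Y ⟨y, -, rfl⟩
    rw [leibniz_flip_comm b hb]
    exact ⟨b y x, trivial, rfl⟩
  have hdser : ∀ k, dSer S k ≤ Submodule.map b.flip (derSeries b k) := by
    intro k
    induction k with
    | zero => exact le_rfl
    | succ k ih =>
      refine bracketSpan_le' _ fun X hX Y hY => ?_
      obtain ⟨x, hx, rfl⟩ := ih hX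
      obtain ⟨y, hy, rfl⟩ := ih hY
      rw [leibniz_flip_comm b hb]
      exact ⟨b y x, mem_bracketSpan' b hy hx, rfl⟩
  have hSsolv : ∃ k, dSer S k = ⊥ := by
    obtain ⟨s, hs⟩ := hsolv
    refine ⟨s, le_bot_iff.mp ?_⟩
    have := hdser s
    rwa [hs, Submodule.map_bot] at this
  set K : Submodule ℂ L := derSeries b 1 with hK
  have hKρ : ∀ w ∈ K, b.flip w ∈ cSpan S S := by
    have : K ≤ Submodule.comap b.flip (cSpan S S) := by
      refine bracketSpan_le' b fun x _ y _ => ?_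
      rw [Submodule.mem_comap, ← leibniz_flip_comm b hb y x]
      exact mem_bracketSpan' _ ⟨y, trivial, rfl⟩ ⟨x, trivial, rfl⟩
    exact fun w hw => this hw
  obtain ⟨n, F, hF0, hFtop, hFinv, hFlow⟩ :=
    lie_flag_aux (Module.finrank ℂ L) L le_rfl S hScl hSsolv
  have hlcs : ∀ j, idealLCS b K j ≤ F (n - j) := by
    intro j
    induction j with
    | zero =>
      show K ≤ F n
      rw [hFtop]; exact le_top
    | succ j ih =>
      refine bracketSpan_le' b fun u hu w hw => ?_
      rcases Nat.lt_or_ge j n with h | h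
      · have heq : n - j = (n - (j + 1)) + 1 := by omega
        have : b u w = (b.flip w) u := rfl
        rw [this]
        refine hFlow (n - (j + 1)) (b.flip w) (hKρ w hw) ⟨u, ?_, rfl⟩
        rw [← heq]
        exact ih hu
      · have hj0 : n - j = 0 := by omega
        have : u ∈ F 0 := by rw [← hj0]; exact ih hu
        rw [hF0, Submodule.mem_bot] at this
        rw [this, map_zero, LinearMap.zero_apply]
        exact Submodule.zero_mem _
  have hKnilp : IsNilpotentIdeal b K := by
    refine ⟨fun a _ y => ⟨mem_bracketSpan' b trivial trivial, mem_bracketSpan' b trivial trivial⟩,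
      n, le_bot_iff.mp ?_⟩
    have := hlcs n
    rwa [Nat.sub_self, hF0] at this
  exact hN.2 K hKnilp

end LeibnizDerived
section Adjoin

variable {L : Type*} [AddCommGroup L] [Module ℂ L]

/-- Auxiliary filtration: brackets of length `p+1` in `N` with `q` total applications of
right-multiplication by `x`. -/
noncomputable def Wpq (b : L →ₗ[ℂ] L →ₗ[ℂ] L) (x : L) (N : Submodule ℂ L) :
    ℕ → ℕ → Submodule ℂ L
  | 0, q => Submodule.map ((b.flip x) ^ q) N
  | p + 1, q => ⨆ i : {i : ℕ // i ≤ q},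
      bracketSpan b (Wpq b x N p i.1) (Submodule.map ((b.flip x) ^ (q - i.1)) N)

theorem adjoin_nilpotent (b : L →ₗ[ℂ] L →ₗ[ℂ] L) (hb : IsLeibniz b)
    (N : Submodule ℂ L) (hNid : IsIdeal b N)
    (c : ℕ) (hNnil : idealLCS b N c = ⊥)
    (hKN : ∀ u v : L, b u v ∈ N)
    (x : L) (e : ℕ) (hDnil : ∀ u ∈ N, ((b.flip x) ^ e) u = 0) :
    IsNilpotentIdeal b (N ⊔ Submodule.span ℂ {x}) := by
  set B : Module.End ℂ L := b.flip x with hB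
  have hBder : ∀ u v : L, B (b u v) = b (B u) v + b u (B v) := by
    intro u v
    have h := hb u v x
    simp only [hB, LinearMap.flip_apply]
    rw [eq_sub_iff_add_eq] at h
    rw [← h]
    abel
  set V : ℕ → Submodule ℂ L := fun q => Submodule.map (B ^ q) N with hV
  have hV0 : V 0 = N := by
    simp only [hV, pow_zero]
    ext z
    simp [Submodule.mem_map]
  have hVsucc : ∀ q, V (q + 1) = Submodule.map B (V q) := by
    intro q
    simp only [hV, pow_succ']
    rw [Module.End.mul_eq_comp, Submodule.map_comp]
  have hVN : ∀ q, V q ≤ N := by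
    intro q
    induction q with
    | zero => rw [hV0]
    | succ q ih =>
      rw [hVsucc]
      rintro z ⟨u, hu, rfl⟩
      exact (hNid u (ih hu) x).1
  have hVe : ∀ q, e ≤ q → V q = ⊥ := by
    intro q hq
    have hdecomp : B ^ q = (B ^ (q - e)) * (B ^ e) := by
      rw [← pow_add]
      congr 1
      omega
    apply le_bot_iff.mp
    rintro z ⟨u, hu, rfl⟩
    rw [hdecomp, Module.End.mul_apply, hDnil u hu, map_zero]
    exact Submodule.zero_mem _
  -- basic properties of the filtration
  have hWN : ∀ p q, Wpq b x N p q ≤ N := by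
    intro p
    induction p with
    | zero => exact fun q => hVN q
    | succ p ih =>
      intro q
      refine iSup_le fun i => bracketSpan_le' b fun s hs t ht => ?_
      exact (hNid s (ih i.1 hs) t).1
  have hW2 : ∀ p q, bracketSpan b (Wpq b x N p q) N ≤ Wpq b x N (p + 1) q := by
    intro p q
    have h := le_iSup (fun i : {i : ℕ // i ≤ q} =>
      bracketSpan b (Wpq b x N p i.1) (Submodule.map ((b.flip x) ^ (q - i.1)) N)) ⟨q, le_rfl⟩
    simp only [Nat.sub_self] at h
    refine le_trans ?_ h
    apply bracketSpan_mono' b le_rfl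
    rw [← hB]
    intro z hz
    exact ⟨z, hz, by simp⟩
  have hW3 : ∀ p q, Submodule.map B (Wpq b x N p q) ≤ Wpq b x N p (q + 1) := by
    intro p
    induction p with
    | zero =>
      intro q
      show Submodule.map B (V q) ≤ V (q + 1)
      rw [hVsucc]
    | succ p ih =>
      intro q
      show Submodule.map B (⨆ i : {i : ℕ // i ≤ q}, _) ≤ _
      rw [Submodule.map_iSup]
      refine iSup_le fun i => ?_
      have hstep := map_bracketSpan_le' b B hBder (Wpq b x N p i.1)
        (Submodule.map ((b.flip x) ^ (q - i.1)) N)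
      refine le_trans hstep (sup_le ?_ ?_)
      · have h := le_iSup (fun j : {j : ℕ // j ≤ q + 1} =>
          bracketSpan b (Wpq b x N p j.1) (Submodule.map ((b.flip x) ^ ((q + 1) - j.1)) N))
          ⟨i.1 + 1, by have := i.2; omega⟩
        simp only [Nat.add_sub_add_right] at h
        exact le_trans (bracketSpan_mono' b (ih i.1) le_rfl) h
      · have hple := i.2
        have hidx : (q + 1) - i.1 = (q - i.1) + 1 := by omega
        have h := le_iSup (fun j : {j : ℕ // j ≤ q + 1} =>
          bracketSpan b (Wpq b x N p j.1) (Submodule.map ((b.flip x) ^ ((q + 1) - j.1)) N))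
          ⟨i.1, by omega⟩
        rw [hidx] at h
        refine le_trans (bracketSpan_mono' b le_rfl ?_) h
        exact le_of_eq (hVsucc (q - i.1)).symm
  have hW4 : ∀ p q, (p + 1) * e ≤ q → Wpq b x N p q = ⊥ := by
    intro p
    induction p with
    | zero =>
      intro q hq
      exact hVe q (by omega)
    | succ p ih =>
      intro q hq
      apply le_bot_iff.mp
      refine iSup_le fun i => ?_
      rcases Nat.lt_or_ge (q - i.1) e with h | h
      · have hWbot : Wpq b x N p i.1 = ⊥ := by
          apply ih
          have hexp : (p + 1 + 1) * e = (p + 1) * e + e := by ring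
          rw [hexp] at hq
          have hile := i.2
          omega
        rw [hWbot, bracketSpan_bot_left']
      · have hVbot : Submodule.map ((b.flip x) ^ (q - i.1)) N = ⊥ := hVe _ h
        rw [hVbot, bracketSpan_bot_right']
  have hW5 : ∀ p q, Wpq b x N p q ≤ idealLCS b N p := by
    intro p
    induction p with
    | zero => exact fun q => hVN q
    | succ p ih =>
      intro q
      refine iSup_le fun i => ?_
      exact bracketSpan_mono' b (ih i.1) (hVN _)
  have hNdec : ∀ j, idealLCS b N (c + j) ≤ idealLCS b N c := by
    have hstep : ∀ k, idealLCS b N (k + 1) ≤ idealLCS b N k := by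
      intro k
      induction k with
      | zero => exact bracketSpan_le' b fun u hu v hv => (hNid u hu v).1
      | succ k ih => exact bracketSpan_mono' b ih le_rfl
    intro j
    induction j with
    | zero => exact le_rfl
    | succ j ih => exact le_trans (hstep (c + j)) ih
  have hW6 : ∀ p q, c ≤ p → Wpq b x N p q = ⊥ := by
    intro p q hp
    apply le_bot_iff.mp
    refine le_trans (hW5 p q) ?_
    have : idealLCS b N p ≤ idealLCS b N c := by
      have := hNdec (p - c)
      have hpc : c + (p - c) = p := by omega
      rwa [hpc] at this
    rw [hNnil] at this
    exact this
  -- the ideal J = N + ℂ x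
  set J : Submodule ℂ L := N ⊔ Submodule.span ℂ {x} with hJ
  set G : ℕ → Submodule ℂ L := fun k => ⨆ p : {p : ℕ // p ≤ k}, Wpq b x N p.1 (k - p.1)
    with hG
  have hGstep : ∀ k, bracketSpan b (G k) N ⊔ Submodule.map B (G k) ≤ G (k + 1) := by
    intro k
    refine sup_le ?_ ?_
    · refine le_trans (bracketSpan_iSup_left' b _ N) (iSup_le fun p => ?_)
      have h := le_iSup (fun p : {p : ℕ // p ≤ k + 1} => Wpq b x N p.1 ((k + 1) - p.1))
        ⟨p.1 + 1, by have := p.2; omega⟩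
      simp only [Nat.add_sub_add_right] at h
      exact le_trans (hW2 p.1 (k - p.1)) h
    · rw [hG, Submodule.map_iSup]
      refine iSup_le fun p => ?_
      have hple := p.2
      have hidx : (k + 1) - p.1 = (k - p.1) + 1 := by omega
      have h := le_iSup (fun p : {p : ℕ // p ≤ k + 1} => Wpq b x N p.1 ((k + 1) - p.1))
        ⟨p.1, by omega⟩
      rw [hidx] at h
      exact le_trans (hW3 p.1 (k - p.1)) h
  have hNG : ∀ k, N ≤ G k → True := fun _ _ => trivial
  have hJlcs : ∀ k, idealLCS b J (k + 1) ≤ G k := by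
    intro k
    induction k with
    | zero =>
      show bracketSpan b J J ≤ G 0
      have hN0 : N ≤ G 0 := by
        have h := le_iSup (fun p : {p : ℕ // p ≤ 0} => Wpq b x N p.1 (0 - p.1)) ⟨0, le_rfl⟩
        refine le_trans ?_ h
        show N ≤ Wpq b x N 0 0
        rw [show Wpq b x N 0 0 = V 0 from rfl, hV0]
      exact le_trans (bracketSpan_le' b fun u _ v _ => hKN u v) hN0
    | succ k ih =>
      show bracketSpan b (idealLCS b J (k + 1)) J ≤ G (k + 1)
      refine le_trans (bracketSpan_mono' b ih le_rfl) ?_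
      rw [hJ]
      refine le_trans (bracketSpan_sup_right' b (G k) N (Submodule.span ℂ {x})) ?_
      refine le_trans (sup_le_sup le_rfl (bracketSpan_span_singleton_right b (G k) x)) ?_
      exact hGstep k
  have hGbot : G (c + (c + 1) * e) = ⊥ := by
    apply le_bot_iff.mp
    refine iSup_le fun p => ?_
    rcases Nat.lt_or_ge p.1 c with h | h
    · have hmul : (p.1 + 1) * e ≤ (c + 1) * e := by
        have : p.1 + 1 ≤ c + 1 := by omega
        exact Nat.mul_le_mul_right e this
      have : (p.1 + 1) * e ≤ (c + (c + 1) * e) - p.1 := by omega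
      rw [hW4 p.1 _ this]
    · rw [hW6 p.1 _ h]
  constructor
  · intro a _ y
    constructor
    · exact le_sup_left (α := Submodule ℂ L) (hKN a y)
    · exact le_sup_left (α := Submodule ℂ L) (hKN y a)
  · refine ⟨c + (c + 1) * e + 1, le_bot_iff.mp ?_⟩
    rw [← hGbot]
    exact hJlcs (c + (c + 1) * e)

end Adjoin
theorem statement7 {L : Type*} [AddCommGroup L] [Module ℂ L] [FiniteDimensional ℂ L]
    (b : L →ₗ[ℂ] L →ₗ[ℂ] L) (hb : IsLeibniz b) (hsolv : IsSolvableAlg b)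
    (N : Submodule ℂ L) (hN : IsNilradical b N)
    (bN : N →ₗ[ℂ] N →ₗ[ℂ] N) (hbN : ∀ u v : N, (bN u v : L) = b u v)
    (m : ℕ)
    (hbound : ∀ (k : ℕ) (d : Fin k → Module.End ℂ N),
      (∀ i, IsDerivation bN (d i)) →
      (∀ α : Fin k → ℂ, α ≠ 0 → ¬ IsNilpotent (∑ i, α i • d i)) →
      k ≤ m) :
    Module.finrank ℂ L ≤ Module.finrank ℂ N + m := by
  classical
  have hNid : IsIdeal b N := hN.1.1
  obtain ⟨c, hNnil⟩ := hN.1.2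
  have hKle : derSeries b 1 ≤ N := derived_le_nilradical b hb hsolv N hN
  have hKN : ∀ u v : L, b u v ∈ N := by
    intro u v
    refine hKle ?_
    show b u v ∈ bracketSpan b (derSeries b 0) (derSeries b 0)
    exact mem_bracketSpan' b trivial trivial
  have hrank := Submodule.finrank_quotient_add_finrank N
  set q : ℕ := Module.finrank ℂ (L ⧸ N) with hqdef
  let bb : Basis (Fin q) ℂ (L ⧸ N) := Module.finBasis ℂ (L ⧸ N)
  choose xx hxx using fun i => Submodule.mkQ_surjective N (bb i)
  have hinv : ∀ i, ∀ u ∈ N, (b.flip (xx i)) u ∈ N := fun i u hu => (hNid u hu (xx i)).1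
  set d : Fin q → Module.End ℂ N := fun i => (b.flip (xx i)).restrict (hinv i) with hd
  have hder : ∀ i, IsDerivation bN (d i) := by
    intro i u v
    apply Subtype.ext
    have h1 : ((d i (bN u v)) : L) = b (b (u : L) (v : L)) (xx i) := by
      rw [hd]
      rw [LinearMap.restrict_coe_apply, LinearMap.flip_apply, hbN]
    have h2 : ((bN (d i u) v + bN u (d i v) : N) : L)
        = b (b (u : L) (xx i)) (v : L) + b (u : L) (b (v : L) (xx i)) := by
      rw [Submodule.coe_add, hbN, hbN, hd]
      rw [LinearMap.restrict_coe_apply, LinearMap.restrict_coe_apply,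
        LinearMap.flip_apply, LinearMap.flip_apply]
    rw [h1, h2]
    have h := hb (u : L) (v : L) (xx i)
    rw [eq_sub_iff_add_eq] at h
    rw [← h]
    abel
  have hnilind : ∀ α : Fin q → ℂ, α ≠ 0 → ¬ IsNilpotent (∑ i, α i • d i) := by
    intro α hα hnil
    obtain ⟨e, he⟩ := hnil
    set x : L := ∑ i, α i • xx i with hx
    have hBD : ∀ u : N, b.flip x (u : L) = (((∑ i, α i • d i) u : N) : L) := by
      intro u
      rw [LinearMap.flip_apply, hx, map_sum]
      have hlhs : ∀ i : Fin q, b (u : L) (α i • xx i) = α i • b (u : L) (xx i) := by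
        intro i; rw [map_smul]
      rw [Finset.sum_congr rfl (fun i _ => hlhs i)]
      have hrhs : (((∑ i, α i • d i) u : N) : L) = ∑ i, α i • ((d i u : N) : L) := by
        rw [LinearMap.sum_apply]
        rw [Submodule.coe_sum]
        refine Finset.sum_congr rfl fun i _ => ?_
        rw [LinearMap.smul_apply, Submodule.coe_smul]
      rw [hrhs]
      refine Finset.sum_congr rfl fun i _ => ?_
      rw [hd, LinearMap.restrict_coe_apply, LinearMap.flip_apply]
    have hBpow : ∀ (j : ℕ) (u : N),
        ((b.flip x) ^ j) (u : L) = ((((∑ i, α i • d i)) ^ j) u : L) := by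
      intro j
      induction j with
      | zero => intro u; rfl
      | succ j ih =>
        intro u
        rw [pow_succ', pow_succ', Module.End.mul_apply, Module.End.mul_apply, ih u, hBD _]
    have hDnil : ∀ u ∈ N, ((b.flip x) ^ e) u = 0 := by
      intro u hu
      have := hBpow e ⟨u, hu⟩
      rw [he] at this
      simpa using this
    have hJnil := adjoin_nilpotent b hb N hNid c hNnil hKN x e hDnil
    have hJle := hN.2 _ hJnil
    have hxN : x ∈ N :=
      hJle (Submodule.mem_sup_right (Submodule.mem_span_singleton_self x))
    have h0 : N.mkQ x = 0 := (Submodule.Quotient.mk_eq_zero N).mpr hxN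
    rw [hx, map_sum] at h0
    simp only [map_smul, hxx] at h0
    have hall := Fintype.linearIndependent_iff.mp bb.linearIndependent α h0
    exact hα (funext hall)
  have hqm : q ≤ m := hbound q d hder hnilind
  omega
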